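/- For any fixed integer k ≥ 1, the probability that a uniformly random permutation of an n-element set has no cycle of length exactly k tends to e^{−1/k} as n → ∞. -/

import Mathlib

open Filter

section NoKCycleAuxSection
open Function Finset Equiv
open Fin.NatCast
set_option linter.unusedSectionVars false
set_option maxHeartbeats 1000000


namespace NoKCycleAux

variable {k : ℕ} [NeZero k] {α : Type*} [Fintype α] [DecidableEq α]

lemma card_eq_sum_card_fibers {β γ : Type*} [Finite β] [Fintype γ] (f : β → γ) :
    Nat.card β = ∑ c : γ, Nat.card {b : β // f b = c} := by
  classical
  cases nonempty_fintype β
  rw [Nat.card_eq_fintype_card, ← Fintype.card_congr (Equiv.sigmaFiberEquiv f),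
    Fintype.card_sigma]
  simp [Nat.card_eq_fintype_card]

lemma card_inj_comp {ι K O : Type*} [Fintype ι] [Finite K] [Fintype O]
    (q : K → O) (c : ℕ) (hc : ∀ o : O, Nat.card {y : K // q y = o} = c) :
    Nat.card {g : ι → K // Injective (q ∘ g)} =
      (Fintype.card O).descFactorial (Fintype.card ι) * c ^ Fintype.card ι := by
  classical
  have hK : Fintype K := Fintype.ofFinite K
  rw [card_eq_sum_card_fibers (fun g : {g : ι → K // Injective (q ∘ g)} => q ∘ g.1)]
  have h2 : ∀ h : ι → O,
      Nat.card {g : {g : ι → K // Injective (q ∘ g)} // q ∘ g.1 = h} =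
        if Injective h then c ^ Fintype.card ι else 0 := by
    intro h
    by_cases hh : Injective h
    · rw [if_pos hh]
      have e : {g : {g : ι → K // Injective (q ∘ g)} // q ∘ g.1 = h} ≃
          (∀ i : ι, {y : K // q y = h i}) :=
        { toFun := fun g i => ⟨g.1.1 i, congrFun g.2 i⟩
          invFun := fun G => ⟨⟨fun i => (G i).1, by
            intro a b hab
            apply hh
            show h a = h b
            rw [← (G a).2, ← (G b).2]
            exact hab⟩, funext fun i => (G i).2⟩
          left_inv := fun g => by apply Subtype.ext; apply Subtype.ext; rfl
          right_inv := fun G => by funext i; apply Subtype.ext; rfl }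
      rw [Nat.card_congr e, Nat.card_pi]
      simp only [hc, Finset.prod_const, Finset.card_univ]
    · rw [if_neg hh]
      have : IsEmpty {g : {g : ι → K // Injective (q ∘ g)} // q ∘ g.1 = h} :=
        ⟨fun g => hh (g.2 ▸ g.1.2)⟩
      simp
  simp_rw [h2]
  rw [Finset.sum_ite, Finset.sum_const, Finset.sum_const_zero, add_zero, smul_eq_mul]
  congr 1
  rw [← Fintype.card_subtype, Fintype.card_congr (Equiv.subtypeInjectiveEquivEmbedding ι O),
    Fintype.card_embedding_eq]

def shift (j k : ℕ) [NeZero k] : Equiv.Perm (Fin j × Fin k) :=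
  (Equiv.refl (Fin j)).prodCongr (Equiv.addRight (1 : Fin k))

lemma shift_apply {j : ℕ} (p : Fin j × Fin k) : shift j k p = (p.1, p.2 + 1) := rfl

def Compat {j : ℕ} (σ : Equiv.Perm α) (f : Fin j × Fin k ↪ α) : Prop :=
  ∀ p, σ (f p) = f (shift j k p)

variable (k) in
abbrev KS (σ : Equiv.Perm α) : Type _ := {x : α // minimalPeriod (⇑σ) x = k}

variable (k) in
def orbSetoid (σ : Equiv.Perm α) : Setoid (KS k σ) :=
  ⟨fun x y => σ.SameCycle x.1 y.1,
    ⟨fun x => Equiv.Perm.SameCycle.refl σ x.1, Equiv.Perm.SameCycle.symm,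
      Equiv.Perm.SameCycle.trans⟩⟩

lemma compat_iterate {j : ℕ} {σ : Equiv.Perm α} {f : Fin j × Fin k ↪ α} (h : Compat σ f)
    (i : Fin j) (c : Fin k) (t : ℕ) : (⇑σ)^[t] (f (i, c)) = f (i, c + (t : Fin k)) := by
  induction t with
  | zero => simp
  | succ t ih =>
    rw [Function.iterate_succ_apply', ih, h (i, c + (t : Fin k)), shift_apply]
    congr 2
    push_cast
    rw [add_assoc]

lemma compat_minimalPeriod {j : ℕ} {σ : Equiv.Perm α} {f : Fin j × Fin k ↪ α}
    (h : Compat σ f) (i : Fin j) : minimalPeriod (⇑σ) (f (i, 0)) = k := by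
  have hk0 : 0 < k := Nat.pos_of_ne_zero (NeZero.ne k)
  have hper : IsPeriodicPt (⇑σ) k (f (i, 0)) := by
    show (⇑σ)^[k] (f (i, 0)) = f (i, 0)
    rw [compat_iterate h i 0 k]
    congr 2
    simp
  have hdvd : minimalPeriod (⇑σ) (f (i, 0)) ∣ k := hper.minimalPeriod_dvd
  have hd2 : (⇑σ)^[minimalPeriod (⇑σ) (f (i, 0))] (f (i, 0)) = f (i, 0) :=
    iterate_minimalPeriod
  rw [compat_iterate h i 0] at hd2
  have h3 : ((minimalPeriod (⇑σ) (f (i, 0)) : Fin k)) = 0 := by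
    have := f.injective hd2
    have := (Prod.ext_iff.1 this).2
    simpa using this
  have h4 : k ∣ minimalPeriod (⇑σ) (f (i, 0)) := by
    rwa [Fin.natCast_eq_zero] at h3
  exact Nat.dvd_antisymm hdvd h4

lemma sameCycle_iterate {σ : Equiv.Perm α} (x : α) (t : ℕ) :
    σ.SameCycle x ((⇑σ)^[t] x) := ⟨(t : ℤ), by rw [zpow_natCast]; rfl⟩

noncomputable def equivB1 {j : ℕ} (σ : Equiv.Perm α) :
    {f : Fin j × Fin k ↪ α // Compat σ f} ≃
      {g : Fin j → KS k σ // Injective (Quotient.mk (orbSetoid k σ) ∘ g)} where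
  toFun f := ⟨fun i => ⟨f.1 (i, 0), compat_minimalPeriod f.2 i⟩, by
    intro a b hab
    have hs : σ.SameCycle (f.1 (a, 0)) (f.1 (b, 0)) := Quotient.exact hab
    obtain ⟨t, ht, hteq⟩ := hs.exists_pow_eq'
    have h2 : (⇑σ)^[t] (f.1 (a, 0)) = f.1 (b, 0) := by
      rw [Equiv.Perm.iterate_eq_pow]; exact hteq
    rw [compat_iterate f.2 a 0 t] at h2
    exact (Prod.ext_iff.1 (f.1.injective h2)).1⟩
  invFun g := ⟨⟨fun p => (⇑σ)^[p.2.1] (g.1 p.1).1, by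
      rintro ⟨a, s⟩ ⟨b, t⟩ hab
      simp only at hab
      have hsc : σ.SameCycle ((g.1 a).1) ((g.1 b).1) :=
        ((sameCycle_iterate (σ := σ) (g.1 a).1 s.1).trans
          (by rw [hab]; exact (sameCycle_iterate (σ := σ) (g.1 b).1 t.1).symm))
      have hab2 : a = b := g.2 (Quotient.sound hsc)
      subst hab2
      have hst : s.1 = t.1 := by
        refine (iterate_eq_iterate_iff_of_lt_minimalPeriod ?_ ?_).1 hab
        · rw [(g.1 a).2]; exact s.isLt
        · rw [(g.1 a).2]; exact t.isLt
      exact Prod.ext rfl (Fin.ext hst)⟩, by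
    rintro ⟨i, t⟩
    show σ ((⇑σ)^[t.1] (g.1 i).1) = (⇑σ)^[(t + 1 : Fin k).1] (g.1 i).1
    rw [← Function.iterate_succ_apply' (⇑σ) t.1 ((g.1 i).1 : α)]
    have hval : (t + 1 : Fin k).1 = (t.1 + 1) % k := by
      rw [Fin.val_add, Fin.val_one', Nat.add_mod, Nat.mod_mod_of_dvd, ← Nat.add_mod]
      exact dvd_rfl
    rw [hval]
    have : (t.1 + 1) % k = (t.1 + 1) % minimalPeriod (⇑σ) (g.1 i).1 := by rw [(g.1 i).2]
    rw [this, iterate_mod_minimalPeriod_eq]⟩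
  left_inv f := by
    apply Subtype.ext
    apply DFunLike.ext
    rintro ⟨i, t⟩
    show (⇑σ)^[t.1] (f.1 (i, 0)) = f.1 (i, t)
    rw [compat_iterate f.2 i 0 t.1, zero_add, Fin.cast_val_eq_self]
  right_inv g := by
    apply Subtype.ext
    funext i
    apply Subtype.ext
    show (⇑σ)^[(0 : Fin k).1] (g.1 i).1 = (g.1 i).1
    simp

noncomputable def tau {j : ℕ} (f : Fin j × Fin k ↪ α) : Equiv.Perm α :=
  (shift j k).viaEmbedding f

lemma tau_compat {j : ℕ} (f : Fin j × Fin k ↪ α) : Compat (tau f) f := fun p =>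
  Equiv.Perm.viaEmbedding_apply _ f p

noncomputable def equivA1 {j : ℕ} (f : Fin j × Fin k ↪ α) :
    {σ : Equiv.Perm α // Compat σ f} ≃ {ρ : Equiv.Perm α // ∀ a ∈ Set.range ⇑f, ρ a = a} where
  toFun σ := ⟨(tau f)⁻¹ * σ.1, by
    rintro a ⟨p, rfl⟩
    have h1 := σ.2 p
    have h2 := tau_compat f p
    simp only [Equiv.Perm.mul_apply, h1, ← h2, Equiv.Perm.inv_def, Equiv.symm_apply_apply]⟩
  invFun ρ := ⟨tau f * ρ.1, by
    intro p
    have := ρ.2 (f p) ⟨p, rfl⟩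
    simp only [Equiv.Perm.mul_apply, this]
    exact tau_compat f p⟩
  left_inv σ := Subtype.ext (by simp [mul_assoc])
  right_inv ρ := Subtype.ext (by simp [mul_assoc])

noncomputable def equivA2 (S : Set α) :
    {ρ : Equiv.Perm α // ∀ a ∈ S, ρ a = a} ≃ Equiv.Perm {a : α // a ∉ S} := by
  classical
  exact ((Equiv.Perm.subtypeEquivSubtypePerm (fun a => a ∉ S)).trans
    (Equiv.subtypeEquiv (Equiv.refl _) (by intro ρ; simp [not_not]))).symm

lemma card_compat_perm {j : ℕ} (f : Fin j × Fin k ↪ α) :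
    Nat.card {σ : Equiv.Perm α // Compat σ f} = (Fintype.card α - j * k).factorial := by
  classical
  rw [Nat.card_congr ((equivA1 f).trans (equivA2 (Set.range ⇑f)))]
  rw [Nat.card_eq_fintype_card, Fintype.card_perm]
  congr 1
  rw [Fintype.card_subtype_compl]
  congr 1
  rw [← Fintype.card_congr (Equiv.ofInjective _ f.injective)]
  simp

variable (k) in
abbrev OS (σ : Equiv.Perm α) : Type _ := Quotient (orbSetoid k σ)

variable (k) in
noncomputable def mS (σ : Equiv.Perm α) : ℕ := Nat.card (OS k σ)


lemma mem_periodicPts_of_KS {σ : Equiv.Perm α} (y : KS k σ) : y.1 ∈ periodicPts ⇑σ := by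
  rw [← minimalPeriod_pos_iff_mem_periodicPts, y.2]
  exact Nat.pos_of_ne_zero (NeZero.ne k)

lemma card_orbit (σ : Equiv.Perm α) (o : OS k σ) :
    Nat.card {z : KS k σ // Quotient.mk (orbSetoid k σ) z = o} = k := by
  classical
  induction o using Quotient.ind with
  | _ y =>
  have hk0 : 0 < k := Nat.pos_of_ne_zero (NeZero.ne k)
  have hbij : Function.Bijective (fun t : Fin k =>
      (⟨⟨(⇑σ)^[t.1] y.1, by rw [minimalPeriod_apply_iterate (mem_periodicPts_of_KS y)]; exact y.2⟩,
        Quotient.sound (by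
          refine Equiv.Perm.SameCycle.symm ⟨(t.1 : ℤ), ?_⟩
          rw [zpow_natCast]
          rfl)⟩ :
        {z : KS k σ // Quotient.mk (orbSetoid k σ) z = Quotient.mk (orbSetoid k σ) y})) := by
    constructor
    · intro a b hab
      have h1 : (⇑σ)^[a.1] y.1 = (⇑σ)^[b.1] y.1 := by
        simpa [Subtype.ext_iff] using hab
      have := (iterate_eq_iterate_iff_of_lt_minimalPeriod
        (by rw [y.2]; exact a.isLt) (by rw [y.2]; exact b.isLt)).1 h1
      exact Fin.ext this
    · rintro ⟨⟨z, hz⟩, hq⟩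
      have hsc : σ.SameCycle y.1 z := Quotient.exact hq |>.symm
      obtain ⟨i, hi, hieq⟩ := hsc.exists_pow_eq'
      refine ⟨⟨i % k, Nat.mod_lt _ hk0⟩, ?_⟩
      apply Subtype.ext; apply Subtype.ext
      show (⇑σ)^[i % k] y.1 = z
      have : i % k = i % minimalPeriod (⇑σ) y.1 := by rw [y.2]
      rw [this, iterate_mod_minimalPeriod_eq]
      rw [← hieq]
      rfl
  rw [Nat.card_congr (Equiv.ofBijective _ hbij).symm, Nat.card_eq_fintype_card, Fintype.card_fin]

lemma card_KS (σ : Equiv.Perm α) : Nat.card (KS k σ) = mS k σ * k := by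
  classical
  have : Fintype (OS k σ) := Fintype.ofFinite _
  rw [card_eq_sum_card_fibers (Quotient.mk (orbSetoid k σ))]
  simp only [card_orbit]
  rw [Finset.sum_const, card_univ, smul_eq_mul, mS, Nat.card_eq_fintype_card]


end NoKCycleAux

namespace NoKCycleAux

variable {k : ℕ} [NeZero k] {α : Type*} [Fintype α] [DecidableEq α]

lemma card_fib {j : ℕ} (σ : Equiv.Perm α) :
    Nat.card {f : Fin j × Fin k ↪ α // Compat σ f} = (mS k σ).descFactorial j * k ^ j := by
  classical
  have hO : Fintype (OS k σ) := Fintype.ofFinite _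
  rw [Nat.card_congr (equivB1 σ),
    card_inj_comp (Quotient.mk (orbSetoid k σ)) k (card_orbit σ)]
  rw [Fintype.card_fin, mS, Nat.card_eq_fintype_card]

lemma key_count (j : ℕ) :
    ∑ σ : Equiv.Perm α, (mS k σ).descFactorial j * k ^ j =
      (Fintype.card α).descFactorial (j * k) * (Fintype.card α - j * k).factorial := by
  classical
  have hA : Nat.card {p : Equiv.Perm α × (Fin j × Fin k ↪ α) // Compat p.1 p.2} =
      ∑ σ : Equiv.Perm α, (mS k σ).descFactorial j * k ^ j := by
    rw [card_eq_sum_card_fibers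
      (fun p : {p : Equiv.Perm α × (Fin j × Fin k ↪ α) // Compat p.1 p.2} => p.1.1)]
    refine Finset.sum_congr rfl fun σ _ => ?_
    rw [← card_fib (k := k) (j := j) σ]
    refine Nat.card_congr ⟨fun p => ⟨p.1.1.2, by have h := p.1.2; rw [p.2] at h; exact h⟩,
      fun f => ⟨⟨(σ, f.1), f.2⟩, rfl⟩, ?_, ?_⟩
    · rintro ⟨⟨⟨σ', f⟩, h⟩, rfl⟩; rfl
    · intro f; rfl
  have hB : Nat.card {p : Equiv.Perm α × (Fin j × Fin k ↪ α) // Compat p.1 p.2} =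
      (Fintype.card α).descFactorial (j * k) * (Fintype.card α - j * k).factorial := by
    rw [card_eq_sum_card_fibers
      (fun p : {p : Equiv.Perm α × (Fin j × Fin k ↪ α) // Compat p.1 p.2} => p.1.2)]
    have hfib : ∀ f : Fin j × Fin k ↪ α,
        Nat.card {p : {p : Equiv.Perm α × (Fin j × Fin k ↪ α) // Compat p.1 p.2} // p.1.2 = f}
          = (Fintype.card α - j * k).factorial := by
      intro f
      rw [← card_compat_perm (k := k) f]
      refine Nat.card_congr ⟨fun p => ⟨p.1.1.1, by have h := p.1.2; rw [p.2] at h; exact h⟩,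
        fun s => ⟨⟨(s.1, f), s.2⟩, rfl⟩, ?_, ?_⟩
      · rintro ⟨⟨⟨σ', f'⟩, h⟩, rfl⟩; rfl
      · intro s; rfl
    simp_rw [hfib]
    rw [Finset.sum_const, card_univ, smul_eq_mul]
    congr 1
    rw [Fintype.card_embedding_eq, Fintype.card_prod, Fintype.card_fin, Fintype.card_fin]
  rw [← hA, hB]

end NoKCycleAux

namespace NoKCycleAux


lemma alt_sum_choose (m J : ℕ) (h : m ≤ J) :
    ∑ i ∈ range (J + 1), (-1 : ℝ) ^ i * (m.choose i : ℝ) = if m = 0 then 1 else 0 := by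
  rw [← Finset.sum_subset (Finset.range_subset_range.2 (by omega) : range (m + 1) ⊆ range (J + 1))
    (fun i hi hni => by
      have hmi : m < i := by
        simp only [Finset.mem_range] at hi hni
        omega
      simp [Nat.choose_eq_zero_of_lt hmi])]
  have h2 := @Int.alternating_sum_range_choose m
  have h3 : ((∑ i ∈ range (m + 1), (-1 : ℤ) ^ i * (m.choose i) : ℤ) : ℝ)
      = ((if m = 0 then 1 else 0 : ℤ) : ℝ) := by rw [h2]
  push_cast at h3
  rw [h3]

end NoKCycleAux

namespace NoKCycleAux

variable {k : ℕ} [NeZero k] {α : Type*} [Fintype α] [DecidableEq α]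

lemma mS_le_div (σ : Equiv.Perm α) : mS k σ ≤ Fintype.card α / k := by
  have hk0 : 0 < k := Nat.pos_of_ne_zero (NeZero.ne k)
  rw [Nat.le_div_iff_mul_le hk0, ← card_KS]
  calc Nat.card (KS k σ) ≤ Nat.card α :=
        Nat.card_le_card_of_injective _ Subtype.val_injective
    _ = Fintype.card α := Nat.card_eq_fintype_card

lemma mS_eq_zero_iff (σ : Equiv.Perm α) :
    mS k σ = 0 ↔ ∀ x : α, minimalPeriod (⇑σ) x ≠ k := by
  have hk0 : 0 < k := Nat.pos_of_ne_zero (NeZero.ne k)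
  constructor
  · intro h x hx
    have h0 : Nat.card (KS k σ) = 0 := by rw [card_KS, h, zero_mul]
    rw [Nat.card_eq_zero] at h0
    rcases h0 with h0 | h0
    · exact h0.false ⟨x, hx⟩
    · exact absurd (Subtype.finite : Finite (KS k σ)) h0.not_finite
  · intro h
    have he : IsEmpty (KS k σ) := ⟨fun y => h y.1 y.2⟩
    have heO : IsEmpty (OS k σ) := ⟨fun o => by
      induction o using Quotient.ind with
      | _ y => exact he.false y⟩
    rw [mS, Nat.card_of_isEmpty]

lemma card_noK :
    Nat.card {σ : Equiv.Perm α // ∀ x : α, minimalPeriod (⇑σ) x ≠ k} =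
      ∑ σ : Equiv.Perm α, (if mS k σ = 0 then 1 else 0) := by
  classical
  rw [Nat.card_eq_fintype_card, Fintype.card_subtype]
  rw [Finset.card_filter]
  refine Finset.sum_congr rfl fun σ _ => ?_
  by_cases h : mS k σ = 0
  · rw [if_pos ((mS_eq_zero_iff σ).1 h), if_pos h]
  · rw [if_neg (fun hc => h ((mS_eq_zero_iff σ).2 hc)), if_neg h]

end NoKCycleAux

namespace NoKCycleAux

variable {k : ℕ} [NeZero k] {α : Type*} [Fintype α] [DecidableEq α]

lemma prob_eq :
    (Nat.card {σ : Equiv.Perm α // ∀ x : α, minimalPeriod (⇑σ) x ≠ k} : ℝ) /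
        (Fintype.card α).factorial
      = ∑ i ∈ range (Fintype.card α / k + 1), (-1 / (k : ℝ)) ^ i / i.factorial := by
  classical
  have hk0 : 0 < k := Nat.pos_of_ne_zero (NeZero.ne k)
  have hkR : (k : ℝ) ≠ 0 := Nat.cast_ne_zero.2 (NeZero.ne k)
  set N := Fintype.card α with hN
  -- step 1: indicator sum
  have hcard : (Nat.card {σ : Equiv.Perm α // ∀ x : α, minimalPeriod (⇑σ) x ≠ k} : ℝ)
      = ∑ σ : Equiv.Perm α, (if mS k σ = 0 then (1 : ℝ) else 0) := by
    rw [card_noK]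
    push_cast
    refine Finset.sum_congr rfl fun σ _ => ?_
    split <;> simp
  -- step 2: binomial expansion and swap
  have hswap : ∑ σ : Equiv.Perm α, (if mS k σ = 0 then (1 : ℝ) else 0)
      = ∑ i ∈ range (N / k + 1),
          (-1 : ℝ) ^ i * ∑ σ : Equiv.Perm α, ((mS k σ).choose i : ℝ) := by
    have h1 : ∀ σ : Equiv.Perm α, (if mS k σ = 0 then (1 : ℝ) else 0)
        = ∑ i ∈ range (N / k + 1), (-1 : ℝ) ^ i * ((mS k σ).choose i : ℝ) := fun σ =>
      (alt_sum_choose _ _ (mS_le_div σ)).symm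
    simp_rw [h1]
    rw [Finset.sum_comm]
    simp_rw [Finset.mul_sum]
  -- step 3: evaluate inner sum
  have hkey : ∀ i : ℕ, (∑ σ : Equiv.Perm α, ((mS k σ).choose i : ℝ))
      * (i.factorial * (k : ℝ) ^ i)
      = ((N.descFactorial (i * k) * (N - i * k).factorial : ℕ) : ℝ) := by
    intro i
    have h := key_count (α := α) (k := k) i
    calc (∑ σ : Equiv.Perm α, ((mS k σ).choose i : ℝ)) * (i.factorial * (k : ℝ) ^ i)
        = ∑ σ : Equiv.Perm α, (((mS k σ).descFactorial i * k ^ i : ℕ) : ℝ) := by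
          rw [Finset.sum_mul]
          refine Finset.sum_congr rfl fun σ _ => ?_
          rw [Nat.descFactorial_eq_factorial_mul_choose]
          push_cast
          ring
      _ = _ := by exact_mod_cast congrArg (Nat.cast : ℕ → ℝ) h
  rw [hcard, hswap, Finset.sum_div]
  refine Finset.sum_congr rfl fun i hi => ?_
  have hik : i * k ≤ N := by
    have : i ≤ N / k := by
      simp only [Finset.mem_range] at hi
      omega
    exact le_trans (Nat.mul_le_mul_right k this) (Nat.div_mul_le_self N k)
  have hDN : ((N - i * k).factorial * N.descFactorial (i * k) : ℕ) = N.factorial :=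
    Nat.factorial_mul_descFactorial hik
  have hfacR : ((i.factorial : ℝ)) ≠ 0 := Nat.cast_ne_zero.2 i.factorial_ne_zero
  have hNfacR : ((N.factorial : ℝ)) ≠ 0 := Nat.cast_ne_zero.2 N.factorial_ne_zero
  have hkiR : (k : ℝ) ^ i ≠ 0 := pow_ne_zero _ hkR
  have hsum : (∑ σ : Equiv.Perm α, ((mS k σ).choose i : ℝ))
      = (N.factorial : ℝ) / (i.factorial * (k : ℝ) ^ i) := by
    rw [eq_div_iff (by positivity), hkey i, ← hDN]
    push_cast
    ring
  rw [hsum, div_pow]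
  field_simp

end NoKCycleAux

open Filter

end NoKCycleAuxSection

set_option maxHeartbeats 1000000 in
/-- For any fixed `k ≥ 1`, the probability that a uniformly random permutation of an
`n`-element set has no cycle of length exactly `k` tends to `e^{-1/k}` as `n → ∞`.
(The cycle length of a point `x` under `σ` is `Function.minimalPeriod σ x`.) -/
theorem no_k_cycle_prob_tendsto (k : ℕ) (hk : 1 ≤ k) :
    Tendsto
      (fun n =>
        (Nat.card {σ : Equiv.Perm (Fin n) // ∀ x, Function.minimalPeriod (⇑σ) x ≠ k} : ℝ) /
          (Nat.factorial n))
      atTop (nhds (Real.exp (-1 / k))) := by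
  haveI : NeZero k := ⟨by omega⟩
  have hform : ∀ n : ℕ,
      (Nat.card {σ : Equiv.Perm (Fin n) // ∀ x, Function.minimalPeriod (⇑σ) x ≠ k} : ℝ) /
          (Nat.factorial n)
        = ∑ i ∈ Finset.range (n / k + 1), (-1 / (k : ℝ)) ^ i / i.factorial := by
    intro n
    have h := NoKCycleAux.prob_eq (k := k) (α := Fin n)
    rwa [Fintype.card_fin] at h
  simp_rw [hform]
  have hsum : Tendsto (fun N => ∑ i ∈ Finset.range N, (-1 / (k : ℝ)) ^ i / i.factorial)
      atTop (nhds (Real.exp (-1 / k))) := by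
    rw [Real.exp_eq_exp_ℝ]
    exact (NormedSpace.expSeries_div_hasSum_exp (-1 / (k : ℝ))).tendsto_sum_nat
  have hdiv : Tendsto (fun n : ℕ => n / k + 1) atTop atTop := by
    refine Filter.tendsto_atTop_atTop.2 fun b => ⟨k * b, fun n hn => ?_⟩
    have : b ≤ n / k := (Nat.le_div_iff_mul_le (by omega)).2 (by rw [mul_comm]; omega)
    omega
  exact hsum.comp hdiv
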